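/- arXiv:math/0702018 — 5 statements merged into one kernel-verified Lean document; each statement's English description precedes it below -/
import Mathlib

section
/- Fix l ≥ 3. Consider the system of polynomial equations in variables h_1, ..., h_l over ℂ: h_i h_j = 0 for all 1 ≤ i ≤ l-2 and j with j - i ≥ 2, together with h_i (h_{i-1} + h_i + h_{i+1} + 1) = 0 for all 2 ≤ i ≤ l-1. Then (h_1,...,h_l) is a solution if and only if it lies in one of the following families: (i) h_1 = t and h_j = 0 for j ≥ 2, for some t ∈ ℂ; (ii) h_l = t and h_j = 0 for j ≤ l-1, for some t ∈ ℂ; (iii) for some 1 ≤ i ≤ l-1 and t ∈ ℂ, h_i = t, h_{i+1} = -1 - t, and h_j = 0 for j ∉ {i, i+1}. -/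
/-- For `l ≥ 3`, the solutions `(h 1, …, h l)` of the system
`hᵢ hⱼ = 0` (`1 ≤ i ≤ l-2`, `j - i ≥ 2`, `j ≤ l`) and
`hᵢ (h_{i-1} + hᵢ + h_{i+1} + 1) = 0` (`2 ≤ i ≤ l-1`)
are exactly those lying in one of the three families:
(i) `h j = 0` for `2 ≤ j ≤ l`;
(ii) `h j = 0` for `1 ≤ j ≤ l-1`;
(iii) for some `1 ≤ i ≤ l-1`: `h (i+1) = -1 - h i` and `h j = 0` for all other `1 ≤ j ≤ l`. -/
theorem stmt5 (l : ℕ) (hl : 3 ≤ l) (h : ℕ → ℂ) :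
    ((∀ i j : ℕ, 1 ≤ i → i ≤ l - 2 → i + 2 ≤ j → j ≤ l → h i * h j = 0) ∧
     (∀ i : ℕ, 2 ≤ i → i ≤ l - 1 → h i * (h (i-1) + h i + h (i+1) + 1) = 0)) ↔
    ((∀ j : ℕ, 2 ≤ j → j ≤ l → h j = 0) ∨
     (∀ j : ℕ, 1 ≤ j → j ≤ l - 1 → h j = 0) ∨
     (∃ i : ℕ, 1 ≤ i ∧ i ≤ l - 1 ∧ h (i+1) = -1 - h i ∧
        ∀ j : ℕ, 1 ≤ j → j ≤ l → j ≠ i → j ≠ i + 1 → h j = 0)) := by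
  constructor
  · rintro ⟨E1, E2⟩
    have P : ∀ a b : ℕ, 1 ≤ a → a + 2 ≤ b → b ≤ l → h a ≠ 0 → h b = 0 := by
      intro a b ha hab hb hna
      rcases mul_eq_zero.1 (E1 a b ha (by omega) hab hb) with h1 | h1
      · exact absurd h1 hna
      · exact h1
    have P' : ∀ a b : ℕ, 1 ≤ a → a + 2 ≤ b → b ≤ l → h b ≠ 0 → h a = 0 := by
      intro a b ha hab hb hnb
      rcases mul_eq_zero.1 (E1 a b ha (by omega) hab hb) with h1 | h1
      · exact h1
      · exact absurd h1 hnb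
    by_cases c1 : ∀ j, 2 ≤ j → j ≤ l → h j = 0
    · exact Or.inl c1
    push_neg at c1
    obtain ⟨j₀, hj₀2, hj₀l, hj₀⟩ := c1
    by_cases c2 : ∀ j, 1 ≤ j → j ≤ l - 1 → h j = 0
    · exact Or.inr (Or.inl c2)
    push_neg at c2
    obtain ⟨k₀, hk₀1, hk₀l, hk₀⟩ := c2
    right; right
    by_cases cA : h (k₀ + 1) = 0
    · by_cases cB : h (k₀ - 1) = 0 ∨ k₀ = 1
      · -- only k₀ is nonzero
        have hz : ∀ m, 1 ≤ m → m ≤ l → m ≠ k₀ → h m = 0 := by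
          intro m hm1 hml hmne
          rcases lt_or_gt_of_ne hmne with hlt | hgt
          · rcases Nat.lt_or_ge m (k₀ - 1) with h' | h'
            · exact P' m k₀ hm1 (by omega) (by omega) hk₀
            · have hm : m = k₀ - 1 := by omega
              rcases cB with cB | cB
              · rw [hm]; exact cB
              · omega
          · rcases Nat.lt_or_ge (k₀ + 1) m with h' | h'
            · exact P k₀ m hk₀1 (by omega) hml hk₀
            · have hm : m = k₀ + 1 := by omega
              rw [hm]; exact cA
        have hjk : j₀ = k₀ := by
          by_contra hne
          exact hj₀ (hz j₀ (by omega) hj₀l hne)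
        have hk2 : 2 ≤ k₀ := by omega
        have hkm1 : h (k₀ - 1) = 0 := by
          rcases cB with cB | cB
          · exact cB
          · omega
        have heq := E2 k₀ hk2 hk₀l
        rw [hkm1, cA] at heq
        have hkval : h k₀ = -1 := by
          rcases mul_eq_zero.1 heq with h1 | h1
          · exact absurd h1 hk₀
          · linear_combination h1
        refine ⟨k₀, hk₀1, hk₀l, ?_, ?_⟩
        · rw [cA, hkval]; ring
        · intro j hj1 hjl hne1 _
          exact hz j hj1 hjl hne1
      · push_neg at cB
        obtain ⟨hkm1, hk1⟩ := cB
        have hk2 : 2 ≤ k₀ := by omega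
        have heq := E2 k₀ hk2 hk₀l
        rw [cA] at heq
        have hrel : h k₀ = -1 - h (k₀ - 1) := by
          rcases mul_eq_zero.1 heq with h1 | h1
          · exact absurd h1 hk₀
          · linear_combination h1
        have hsucc : k₀ - 1 + 1 = k₀ := by omega
        refine ⟨k₀ - 1, by omega, by omega, ?_, ?_⟩
        · rw [hsucc]; exact hrel
        · intro j hj1 hjl hne1 hne2
          rw [hsucc] at hne2
          rcases Nat.lt_or_ge j k₀ with h' | h'
          · exact P' j k₀ hj1 (by omega) (by omega) hk₀
          · rcases Nat.lt_or_ge (k₀ + 1) j with h'' | h''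
            · exact P k₀ j hk₀1 (by omega) hjl hk₀
            · have hm : j = k₀ + 1 := by omega
              rw [hm]; exact cA
    · -- k₀ and k₀ + 1 both nonzero
      have hz : ∀ m, 1 ≤ m → m ≤ l → m ≠ k₀ → m ≠ k₀ + 1 → h m = 0 := by
        intro m hm1 hml hne1 hne2
        rcases Nat.lt_or_ge m k₀ with h' | h'
        · exact P' m (k₀ + 1) hm1 (by omega) (by omega) cA
        · exact P k₀ m hk₀1 (by omega) hml hk₀
      refine ⟨k₀, hk₀1, hk₀l, ?_, hz⟩
      rcases Nat.lt_or_ge k₀ (l - 1) with hc | hc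
      · -- k₀ + 1 ≤ l - 1 : use equation at k₀ + 1
        have heq := E2 (k₀ + 1) (by omega) (by omega)
        have h2 : h (k₀ + 2) = 0 := hz (k₀ + 2) (by omega) (by omega) (by omega) (by omega)
        rw [Nat.add_sub_cancel] at heq
        have : k₀ + 1 + 1 = k₀ + 2 := rfl
        rw [this, h2] at heq
        rcases mul_eq_zero.1 heq with h1 | h1
        · exact absurd h1 cA
        · linear_combination h1
      · -- k₀ = l - 1 : use equation at k₀
        have hkeq : k₀ = l - 1 := by omega
        have hm1 : h (k₀ - 1) = 0 := hz (k₀ - 1) (by omega) (by omega) (by omega) (by omega)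
        have heq := E2 k₀ (by omega) hk₀l
        rw [hm1] at heq
        rcases mul_eq_zero.1 heq with h1 | h1
        · exact absurd h1 hk₀
        · linear_combination h1
  · rintro (c | c | ⟨i₀, hi1, hi2, hrel, hz⟩)
    · constructor
      · intro i j _ _ hij hjl
        rw [c j (by omega) hjl, mul_zero]
      · intro i hi2 hil
        rw [c i hi2 (by omega), zero_mul]
    · constructor
      · intro i j hi1 hil _ _
        rw [c i hi1 (by omega), zero_mul]
      · intro i hi2 hil
        rw [c i (by omega) hil, zero_mul]
    · constructor
      · intro i j hi1 hil2 hij hjl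
        by_cases h1 : i = i₀ ∨ i = i₀ + 1
        · have hjz : h j = 0 := by
            rcases h1 with h1 | h1 <;> exact hz j (by omega) hjl (by omega) (by omega)
          rw [hjz, mul_zero]
        · push_neg at h1
          rw [hz i hi1 (by omega) h1.1 h1.2, zero_mul]
      · intro i hi2' hil
        by_cases h1 : i = i₀
        · subst h1
          have hm1 : h (i - 1) = 0 := hz (i - 1) (by omega) (by omega) (by omega) (by omega)
          rw [hm1, hrel]; ring
        · by_cases h2 : i = i₀ + 1
          · subst h2
            have hp1 : h (i₀ + 1 + 1) = 0 :=
              hz (i₀ + 2) (by omega) (by omega) (by omega) (by omega)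
            rw [hp1, Nat.add_sub_cancel, hrel]; ring
          · rw [hz i (by omega) (by omega) h1 h2, zero_mul]
end

section
/- Let e, f, h be elements of an associative ℂ-algebra satisfying the sl_2 relations [h,e] = 2e, [h,f] = -2f, [e,f] = h (e.g. in U(sl_2)). Then for all integers m ≥ k ≥ 0, e^m f^k ≡ m(m-1)···(m-k+1) · (h-m+k)(h-m+k-1)···(h-m+1) · e^{m-k} modulo the left ideal generated by e^{m-k+1}, where the product of (h - j) factors is over j from m-k down to m-1 (i.e. k consecutive factors). -/
section aux
variable {A : Type*} [Ring A] (e f h : A)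

lemma efA (he : h * e - e * h = 2 * e) (hef : e * f - f * e = h) :
    ∀ n : ℕ, e ^ (n + 1) * f =
      f * e ^ (n + 1) + ((n + 1 : ℕ) : A) * ((h - (n : A)) * e ^ n) := by
  have hef' : e * f = f * e + h := by rw [← hef]; noncomm_ring
  have he' : e * h = h * e - 2 * e := by rw [← he]; noncomm_ring
  intro n
  induction n with
  | zero => simpa using hef'
  | succ n ih =>
    push_cast
    push_cast at ih
    have hne : e * (n : A) = (n : A) * e := (Nat.cast_commute n e).eq.symm
    have hNe : e * ((n : A) + 1) = ((n : A) + 1) * e :=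
      (((Nat.cast_commute n e)).add_left (Commute.one_left e)).eq.symm
    have hX : e * (h - (n : A)) = (h - (n : A) - 2) * e := by
      rw [mul_sub, he', hne]; noncomm_ring
    have hc : e * e ^ n = e ^ n * e := by rw [← pow_succ', pow_succ]
    have hpow1 : e ^ (n + 1) = e ^ n * e := pow_succ e n
    have hpow2 : e ^ (n + 1 + 1) = e ^ n * e * e := by rw [pow_succ, pow_succ]
    rw [hpow1, hpow2]
    rw [hpow1] at ih
    calc e ^ n * e * e * f = e * (e ^ n * e * f) := by
          rw [← mul_assoc, ← mul_assoc, hc]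
      _ = e * (f * (e ^ n * e) + ((n : A) + 1) * ((h - (n : A)) * e ^ n)) := by rw [ih]
      _ = (e * f) * (e ^ n * e) + ((n : A) + 1) * ((e * (h - (n : A))) * e ^ n) := by
          rw [mul_add, ← mul_assoc e f,
            ← mul_assoc e ((n : A) + 1) ((h - (n : A)) * e ^ n), hNe,
            mul_assoc ((n : A) + 1) e ((h - (n : A)) * e ^ n),
            ← mul_assoc e (h - (n : A)) (e ^ n)]
      _ = (f * e + h) * (e ^ n * e)
            + ((n : A) + 1) * (((h - (n : A) - 2) * e) * e ^ n) := by rw [hef', hX]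
      _ = f * ((e * e ^ n) * e) + h * (e ^ n * e)
            + ((n : A) + 1) * ((h - (n : A) - 2) * (e * e ^ n)) := by noncomm_ring
      _ = f * ((e ^ n * e) * e) + h * (e ^ n * e)
            + ((n : A) + 1) * ((h - (n : A) - 2) * (e ^ n * e)) := by rw [hc]
      _ = f * (e ^ n * e * e) + ((n : A) + 1 + 1) * ((h - ((n : A) + 1)) * (e ^ n * e)) := by
          noncomm_ring
end aux

/-- If `e, f, h` in an associative ℂ-algebra satisfy the `sl₂` relations, then for `m ≥ k ≥ 0`,
`e^m f^k ≡ m(m-1)⋯(m-k+1) ⬝ (h-m+k)(h-m+k-1)⋯(h-m+1) ⬝ e^(m-k)` modulo the left ideal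
generated by `e^(m-k+1)`. -/
theorem stmt8 {A : Type*} [Ring A] [Algebra ℂ A] (e f h : A)
    (he : h * e - e * h = 2 * e) (hf : h * f - f * h = -(2 * f))
    (hef : e * f - f * e = h)
    (m k : ℕ) (hk : k ≤ m) :
    e ^ m * f ^ k -
      (Nat.descFactorial m k : A) *
        (((List.range k).map (fun j => h - ((m - k + j : ℕ) : A))).prod * e ^ (m - k))
      ∈ Submodule.span A {e ^ (m - k + 1)} := by
  induction k with
  | zero => simp
  | succ k ih =>
    have hk' : k ≤ m := Nat.le_of_succ_le hk
    have ihm := ih hk'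
    rw [Submodule.mem_span_singleton] at ihm ⊢
    obtain ⟨c, hc⟩ := ihm
    rw [smul_eq_mul] at hc
    set n := m - (k + 1) with hn
    have hn1 : m - k = n + 1 := by omega
    rw [hn1] at hc
    set P : A := ((List.range k).map (fun j => h - ((n + 1 + j : ℕ) : A))).prod with hP
    set D : A := (Nat.descFactorial m k : A) with hD
    set N1 : A := ((n + 1 : ℕ) : A) with hN1
    set N2 : A := ((n + 1 + 1 : ℕ) : A) with hN2
    set Q : A := h - (n : A) with hQ
    set Q1 : A := h - ((n + 1 : ℕ) : A) with hQ1
    -- the (k+1)-fold product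
    have hPsucc : ((List.range (k + 1)).map (fun j => h - ((n + j : ℕ) : A))).prod
        = Q * P := by
      rw [List.range_succ_eq_map, List.map_cons, List.prod_cons, List.map_map]
      have h2 : (List.range k).map ((fun j => h - ((n + j : ℕ) : A)) ∘ Nat.succ)
          = (List.range k).map (fun j => h - ((n + 1 + j : ℕ) : A)) := by
        apply List.map_congr_left
        intro j hj
        simp only [Function.comp_apply]
        congr 2
        omega
      rw [h2, ← hP]
      simp [hQ]
    -- commutation of P with Q
    have hPc : Q * P = P * Q := by
      rw [hP, hQ]
      refine (Commute.list_prod_right _ _ ?_).eq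
      intro x hx
      simp only [List.mem_map] at hx
      obtain ⟨j, _, rfl⟩ := hx
      exact ((Commute.refl h).sub_left (Nat.cast_commute n h)).sub_right
        ((Nat.cast_commute (n + 1 + j) (h - (n : A))).symm)
    -- descFactorial recursion
    have hdf : (Nat.descFactorial m (k + 1) : A) = N1 * D := by
      rw [Nat.descFactorial_succ, Nat.cast_mul, hn1, hD, hN1]
    -- the two commutator identities
    have hB1 := efA e f h he hef n
    have hB2 := efA e f h he hef (n + 1)
    rw [← hN1, ← hQ] at hB1
    rw [← hN2, ← hQ1] at hB2
    -- expand e^m f^(k+1)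
    have hfk : e ^ m * f ^ (k + 1)
        = c * (e ^ (n + 1 + 1) * f) + D * (P * (e ^ (n + 1) * f)) := by
      have h0 : e ^ m * f ^ k = c * e ^ (n + 1 + 1) + D * (P * e ^ (n + 1)) :=
        sub_eq_iff_eq_add.mp hc.symm
      rw [pow_succ f k, ← mul_assoc, h0]; noncomm_ring
    rw [hB1, hB2] at hfk
    have hcomm1 : P * (N1 * (Q * e ^ n)) = N1 * (P * (Q * e ^ n)) := by
      rw [← mul_assoc, ← (Nat.cast_commute (n + 1) P).eq, ← hN1, mul_assoc]
    have hcomm2 : D * (N1 * (P * (Q * e ^ n))) = (N1 * D) * ((P * Q) * e ^ n) := by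
      rw [← mul_assoc D N1, hD, hN1,
        ← (Nat.cast_commute (n + 1) ((Nat.descFactorial m k : ℕ) : A)).eq,
        mul_assoc P Q (e ^ n)]
    rw [mul_add P (f * e ^ (n + 1)) (N1 * (Q * e ^ n)), hcomm1,
      mul_add D (P * (f * e ^ (n + 1))) (N1 * (P * (Q * e ^ n))), hcomm2] at hfk
    refine ⟨D * (P * f) + c * (f * e) + c * (N2 * Q1), ?_⟩
    rw [smul_eq_mul, hfk, hPsucc, hdf, hPc]
    have hpow2 : e ^ (n + 1 + 1) = e * e ^ (n + 1) := pow_succ' e (n + 1)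
    rw [hpow2]
    noncomm_ring
end

section
/- In U(sl_2) (generators e, f, h with [h,e]=2e, [h,f]=-2f, [e,f]=h), for all integers k, m with 0 ≤ m ≤ k, (ad f)^m (e^k) ≡ (-1)^m · k(k-1)···(k-m+1) · (h-k+1)(h-k+2)···(h-k+m) · e^{k-m} modulo the left ideal generated by e^{k-m+1}. -/
open LieAlgebra.SpecialLinear
set_option maxHeartbeats 2000000

/-- The universal enveloping algebra `U(sl₂(ℂ))`. -/
noncomputable abbrev Usl2 : Type := UniversalEnvelopingAlgebra ℂ (sl (Fin 2) ℂ)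

/-- The image in `U(sl₂)` of the standard generator `e = E₁₂`. -/
noncomputable def uE : Usl2 := UniversalEnvelopingAlgebra.ι ℂ (single (0 : Fin 2) (1 : Fin 2) (by decide) (1 : ℂ))

/-- The image in `U(sl₂)` of the standard generator `f = E₂₁`. -/
noncomputable def uF : Usl2 := UniversalEnvelopingAlgebra.ι ℂ (single (1 : Fin 2) (0 : Fin 2) (by decide) (1 : ℂ))

/-- The image in `U(sl₂)` of the standard generator `h = ⁅e, f⁆`. -/
noncomputable def uH : Usl2 :=
  UniversalEnvelopingAlgebra.ι ℂ ⁅(single (0:Fin 2) (1:Fin 2) (by decide) (1 : ℂ) : sl (Fin 2) ℂ), (single (1:Fin 2) (0:Fin 2) (by decide) (1 : ℂ) : sl (Fin 2) ℂ)⁆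

lemma slHE : ⁅⁅(single (0:Fin 2) (1:Fin 2) (by decide) (1 : ℂ) : sl (Fin 2) ℂ), (single (1:Fin 2) (0:Fin 2) (by decide) (1 : ℂ) : sl (Fin 2) ℂ)⁆, (single (0:Fin 2) (1:Fin 2) (by decide) (1 : ℂ) : sl (Fin 2) ℂ)⁆ = (2:ℂ) • (single (0:Fin 2) (1:Fin 2) (by decide) (1 : ℂ) : sl (Fin 2) ℂ) := by
  apply Subtype.ext
  rw [show (((2:ℂ) • (single (0:Fin 2) (1:Fin 2) (by decide) (1 : ℂ)) : sl (Fin 2) ℂ) : Matrix (Fin 2) (Fin 2) ℂ) = (2:ℂ) • Matrix.single 0 1 1 from rfl]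
  ext i j
  fin_cases i <;> fin_cases j <;>
    simp [LieSubalgebra.coe_bracket, sl_bracket, Ring.lie_def, Matrix.mul_apply,
      Fin.sum_univ_two, Matrix.single, Matrix.sub_apply, Matrix.smul_apply,
      smul_eq_mul] <;> norm_num

section
attribute [local instance 100] LieRing.ofAssociativeRing

lemma uHE : uH * uE = uE * uH + 2 * uE := by
  have h := (UniversalEnvelopingAlgebra.ι ℂ (L := sl (Fin 2) ℂ)).map_lie
    (⁅(single (0:Fin 2) (1:Fin 2) (by decide) (1 : ℂ) : sl (Fin 2) ℂ), (single (1:Fin 2) (0:Fin 2) (by decide) (1 : ℂ) : sl (Fin 2) ℂ)⁆) (single (0:Fin 2) (1:Fin 2) (by decide) (1 : ℂ))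
  rw [slHE] at h
  simp only [Ring.lie_def, map_smul, Algebra.smul_def, map_ofNat] at h
  rw [show (UniversalEnvelopingAlgebra.ι ℂ ⁅(single (0:Fin 2) (1:Fin 2) (by decide) (1 : ℂ) : sl (Fin 2) ℂ), (single (1:Fin 2) (0:Fin 2) (by decide) (1 : ℂ) : sl (Fin 2) ℂ)⁆ : Usl2) = uH from rfl] at h
  rw [show (UniversalEnvelopingAlgebra.ι ℂ (single (0:Fin 2) (1:Fin 2) (by decide) (1 : ℂ) : sl (Fin 2) ℂ) : Usl2) = uE from rfl] at h
  have h2 := sub_eq_iff_eq_add.mp h.symm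
  rw [h2, add_comm]

lemma uEF : uE * uF = uF * uE + uH := by
  have h := (UniversalEnvelopingAlgebra.ι ℂ (L := sl (Fin 2) ℂ)).map_lie
    (single (0:Fin 2) (1:Fin 2) (by decide) (1 : ℂ)) (single (1:Fin 2) (0:Fin 2) (by decide) (1 : ℂ))
  simp only [Ring.lie_def] at h
  rw [show (UniversalEnvelopingAlgebra.ι ℂ ⁅(single (0:Fin 2) (1:Fin 2) (by decide) (1 : ℂ) : sl (Fin 2) ℂ), (single (1:Fin 2) (0:Fin 2) (by decide) (1 : ℂ) : sl (Fin 2) ℂ)⁆ : Usl2) = uH from rfl] at h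
  rw [show (UniversalEnvelopingAlgebra.ι ℂ (single (0:Fin 2) (1:Fin 2) (by decide) (1 : ℂ) : sl (Fin 2) ℂ) : Usl2) = uE from rfl] at h
  rw [show (UniversalEnvelopingAlgebra.ι ℂ (single (1:Fin 2) (0:Fin 2) (by decide) (1 : ℂ) : sl (Fin 2) ℂ) : Usl2) = uF from rfl] at h
  have h2 := sub_eq_iff_eq_add.mp h.symm
  rw [h2, add_comm]

end

lemma uHpow (n : ℕ) : uH * uE ^ n = uE ^ n * uH + ((2 * n : ℤ)) • uE ^ n := by
  induction n with
  | zero => simp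
  | succ n ih =>
    rw [pow_succ, ← mul_assoc, ih, add_mul, smul_mul_assoc, mul_assoc, uHE]
    noncomm_ring
    match_scalars <;> push_cast [nsmul_eq_mul, zsmul_eq_mul] <;> try ring

lemma uEFr (x : Usl2) : uE * (uF * x) = uF * (uE * x) + uH * x := by
  rw [← mul_assoc, uEF]; noncomm_ring

lemma uEHr (x : Usl2) : uE * (uH * x) = uH * (uE * x) - (2:ℤ) • (uE * x) := by
  have h : uE * uH = uH * uE - 2 * uE := by rw [uHE]; noncomm_ring
  rw [← mul_assoc, h]; noncomm_ring

lemma uEEr (n : ℕ) (x : Usl2) : uE * (uE ^ n * x) = uE ^ n * (uE * x) := by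
  rw [← mul_assoc, ← pow_succ', pow_succ, mul_assoc]

lemma uEE (n : ℕ) : uE * uE ^ n = uE ^ n * uE := by
  rw [← pow_succ', pow_succ]

lemma uEpowF (n : ℕ) : uE ^ (n+1) * uF =
    uF * uE ^ (n+1) + ((n+1 : ℤ)) • ((uH - (n:ℤ) • 1) * uE ^ n) := by
  induction n with
  | zero => simpa using uEF
  | succ n ih =>
    rw [pow_succ' uE (n+1), mul_assoc, ih]
    noncomm_ring [uEFr, uEHr, uEEr, uEE]
    match_scalars <;> push_cast [nsmul_eq_mul, zsmul_eq_mul] <;> try ring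


lemma mainAux (k : ℕ) : ∀ m, m ≤ k → ∃ a : Usl2,
    (fun a => uF * a - a * uF)^[m] (uE ^ k) =
      ((-1 : ℤ) ^ m * (Nat.descFactorial k m : ℤ)) •
        (((List.range m).map (fun j => uH - ((k - 1 - j : ℕ) : ℤ) • (1:Usl2))).prod * uE ^ (k - m))
      + a * uE ^ (k - m + 1) := by
  intro m
  induction m with
  | zero => exact fun _ => ⟨0, by simp⟩
  | succ m ih =>
    intro hm
    obtain ⟨a, ha⟩ := ih (Nat.le_of_succ_le hm)
    have hkm : k - m = (k - (m + 1)) + 1 := by omega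
    have r1 : uE ^ (k - m) * uF = uF * uE ^ (k - m)
        + ((k - m : ℕ) : ℤ) • ((uH - ((k - (m + 1) : ℕ) : ℤ) • (1:Usl2)) * uE ^ (k - (m + 1))) := by
      rw [hkm, uEpowF, ← hkm,
        show ((k - (m + 1) : ℕ) : ℤ) + 1 = ((k - m : ℕ) : ℤ) from by omega]
    have r2 : uE ^ (k - m + 1) * uF = uF * uE ^ (k - m + 1)
        + ((k - m + 1 : ℕ) : ℤ) • ((uH - ((k - m : ℕ) : ℤ) • (1:Usl2)) * uE ^ (k - m)) := by
      rw [uEpowF (k - m), show ((k - m : ℕ) : ℤ) + 1 = ((k - m + 1 : ℕ) : ℤ) from by omega]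
    have r3 : uE ^ (k - m + 1) = uE * uE ^ (k - m) := by rw [pow_succ']
    refine ⟨((-1 : ℤ) ^ m * (Nat.descFactorial k m : ℤ)) • (uF *
        ((List.range m).map (fun j => uH - ((k - 1 - j : ℕ) : ℤ) • (1:Usl2))).prod)
      - ((-1 : ℤ) ^ m * (Nat.descFactorial k m : ℤ)) •
        (((List.range m).map (fun j => uH - ((k - 1 - j : ℕ) : ℤ) • (1:Usl2))).prod * uF)
      + (uF * a) * uE - (a * uF) * uE
      - ((k - m + 1 : ℕ) : ℤ) • (a * (uH - ((k - m : ℕ) : ℤ) • (1:Usl2))), ?_⟩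
    simp only [Function.iterate_succ_apply']
    rw [ha, List.range_succ, Nat.descFactorial_succ]
    simp only [List.map_append, List.prod_append, List.map_cons, List.map_nil,
      List.prod_cons, List.prod_nil, mul_one]
    rw [show k - (m + 1) + 1 = k - m from by omega,
      show k - 1 - m = k - (m + 1) from by omega]
    rw [mul_add, add_mul, smul_mul_assoc, mul_assoc a (uE ^ (k - m + 1)) uF, r2,
      mul_assoc ((List.range m).map (fun j => uH - ((k - 1 - j : ℕ) : ℤ) • (1:Usl2))).prod
        (uE ^ (k - m)) uF, r1, r3]
    noncomm_ring
    match_scalars <;> push_cast [nsmul_eq_mul, zsmul_eq_mul] <;> try ring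

/-- In `U(sl₂)`, for `0 ≤ m ≤ k`:
`(ad f)^m (e^k) ≡ (-1)^m k(k-1)⋯(k-m+1) ⬝ (h-k+1)(h-k+2)⋯(h-k+m) ⬝ e^(k-m)`
modulo the left ideal generated by `e^(k-m+1)`. -/
theorem stmt9 (k m : ℕ) (hm : m ≤ k) :
    (fun a => uF * a - a * uF)^[m] (uE ^ k) -
      ((-1 : Usl2) ^ m * (Nat.descFactorial k m : Usl2) *
        (((List.range m).map (fun j => uH - ((k - 1 - j : ℕ) : Usl2))).prod * uE ^ (k - m)))
      ∈ Submodule.span Usl2 {uE ^ (k - m + 1)} := by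
  obtain ⟨a, ha⟩ := mainAux k m hm
  rw [Submodule.mem_span_singleton]
  refine ⟨a, ?_⟩
  have hl : (fun j : ℕ => uH - ((k - 1 - j : ℕ) : Usl2))
      = (fun j : ℕ => uH - ((k - 1 - j : ℕ) : ℤ) • (1:Usl2)) := by
    funext j; simp [zsmul_eq_mul]
  have hc : ((-1 : Usl2) ^ m * (Nat.descFactorial k m : Usl2) *
      (((List.range m).map (fun j => uH - ((k - 1 - j : ℕ) : Usl2))).prod * uE ^ (k - m)))
      = ((-1 : ℤ) ^ m * (Nat.descFactorial k m : ℤ)) •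
        (((List.range m).map (fun j => uH - ((k - 1 - j : ℕ) : ℤ) • (1:Usl2))).prod
          * uE ^ (k - m)) := by
    rw [hl, zsmul_eq_mul]
    norm_cast
  rw [smul_eq_mul, hc, ha, add_sub_cancel_left]
end

section
/- For every positive integer n and every element x of a commutative ℚ-algebra, ∑_{t=0}^{n} (-1)^t · ((2n-t)!/(n-t)!) · C(x, t) = (-1)^n · n! · C(x - n - 1, n), where C(x, t) = x(x-1)···(x-t+1)/t! is the generalized binomial coefficient. -/
/-- The generalized binomial coefficient `C(x, r) = x(x-1)⋯(x-r+1)/r!` of an element `x`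
of a commutative ℚ-algebra. -/
noncomputable def gbinom {A : Type*} [CommRing A] [Algebra ℚ A] (x : A) (r : ℕ) : A :=
  ((r.factorial : ℚ)⁻¹) • ∏ j ∈ Finset.range r, (x - j)

lemma descPochhammer_smeval_eq_prod {A : Type*} [CommRing A] (x : A) (r : ℕ) :
    (descPochhammer ℤ r).smeval x = ∏ j ∈ Finset.range r, (x - j) := by
  induction r with
  | zero => simp [descPochhammer_zero, Polynomial.smeval_one]
  | succ r ih =>
    rw [descPochhammer_succ_right, Polynomial.smeval_mul, ih, Finset.prod_range_succ]
    congr 1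
    simp [Polynomial.smeval_sub, Polynomial.smeval_X, Polynomial.smeval_natCast]

lemma fact_cancel {A : Type*} [CommRing A] [Algebra ℚ A] (r : ℕ) (z : A) :
    (r.factorial : A) * ((r.factorial : ℚ)⁻¹ • z) = z := by
  have h : ((r.factorial : ℕ) : A) = algebraMap ℚ A (r.factorial : ℚ) := by
    simp
  rw [h, Algebra.smul_def, ← mul_assoc, ← map_mul,
    mul_inv_cancel₀ (by exact_mod_cast r.factorial_ne_zero), map_one, one_mul]

lemma prod_neg_cast {A : Type*} [CommRing A] (m : ℕ) : ∀ j : ℕ,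
    ∏ i ∈ Finset.range j, (-(((m + 1 : ℕ)) : A) - (i : A))
      = (-1 : A) ^ j * ((m + j).descFactorial j : A)
  | 0 => by simp
  | j + 1 => by
    rw [Finset.prod_range_succ, prod_neg_cast m j, show m + (j + 1) = (m + j) + 1 from rfl,
      Nat.succ_descFactorial_succ]
    push_cast
    ring

lemma key_nat (n t : ℕ) (ht : t ≤ n) :
    (2 * n - t).descFactorial n = t.factorial * (n.choose t * (2 * n - t).descFactorial (n - t)) := by
  rw [Nat.descFactorial_eq_factorial_mul_choose, Nat.descFactorial_eq_factorial_mul_choose]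
  have h1 : (2 * n - t).choose (n - t) = (2 * n - t).choose n := by
    have h2 : 2 * n - t - n = n - t := by omega
    rw [← h2, Nat.choose_symm (by omega)]
  rw [h1, ← Nat.choose_mul_factorial_mul_factorial ht]
  ring

/-- `∑_{t=0}^{n} (-1)^t (2n-t)!/(n-t)! ⬝ C(x, t) = (-1)^n n! C(x-n-1, n)`. -/
theorem stmt13 {A : Type*} [CommRing A] [Algebra ℚ A] (n : ℕ) (hn : 1 ≤ n) (x : A) :
    ∑ t ∈ Finset.range (n + 1),
        (-1 : A) ^ t * (Nat.descFactorial (2 * n - t) n : A) * gbinom x t =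
      (-1 : A) ^ n * (Nat.factorial n : A) * gbinom (x - ((n + 1 : ℕ) : A)) n := by
  have hRHS : (-1 : A) ^ n * (Nat.factorial n : A) * gbinom (x - ((n + 1 : ℕ) : A)) n
      = (-1 : A) ^ n * (descPochhammer ℤ n).smeval (x + (-(((n + 1 : ℕ)) : A))) := by
    rw [mul_assoc, gbinom, ← descPochhammer_smeval_eq_prod, fact_cancel]
    congr 2
    ring
  rw [hRHS, Ring.descPochhammer_smeval_add n (Commute.all _ _),
    Finset.Nat.sum_antidiagonal_eq_sum_range_succ_mk, Finset.mul_sum]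
  apply Finset.sum_congr rfl
  intro t ht
  have htn : t ≤ n := Nat.lt_succ_iff.mp (Finset.mem_range.mp ht)
  have hc : (descPochhammer ℤ (n - t)).smeval (-(((n + 1 : ℕ)) : A))
      = (-1 : A) ^ (n - t) * ((2 * n - t).descFactorial (n - t) : A) := by
    rw [descPochhammer_smeval_eq_prod]
    have h2 : n + (n - t) = 2 * n - t := by omega
    rw [← h2]
    exact prod_neg_cast n (n - t)
  have hz : (t.factorial : A) * gbinom x t = (descPochhammer ℤ t).smeval x := by
    rw [gbinom, ← descPochhammer_smeval_eq_prod, fact_cancel]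
  have hkey : (Nat.descFactorial (2 * n - t) n : A)
      = (t.factorial : A) * ((n.choose t : A) * ((2 * n - t).descFactorial (n - t) : A)) := by
    exact_mod_cast congrArg (Nat.cast : ℕ → A) (key_nat n t htn)
  have hsign : (-1 : A) ^ n = (-1 : A) ^ t * (-1 : A) ^ (n - t) := by
    rw [← pow_add]
    congr 1
    omega
  have hs : ((-1 : A) ^ (n - t)) ^ 2 = 1 := by
    rw [← pow_mul, mul_comm, pow_mul, neg_one_sq, one_pow]
  rw [hc, hkey, hsign]
  linear_combination ((-1 : A) ^ t * (n.choose t : A) * ((2 * n - t).descFactorial (n - t) : A)) * hz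
    - ((-1 : A) ^ t * (n.choose t : A) * ((2 * n - t).descFactorial (n - t) : A)
        * (descPochhammer ℤ t).smeval x) * hs
end

section
/- For every positive integer n, the following identity holds: ∑_{t=0}^{n} (2n-t)(2n-t-1)···(n-t+1) · (-1)^t · C(x+2n-1, t) = n! · (-1)^n · C(x+n-2, n), as polynomials in x with rational coefficients, where C(y, r) = y(y-1)···(y-r+1)/r!. -/
lemma lemF (a b c : ℕ) :
    ∑ t ∈ Finset.range (b + 1), (a + b - t).choose a * (c + t).choose t
      = (a + b + c + 1).choose b := by
  induction a generalizing b with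
  | zero =>
    simp only [Nat.choose_zero_right, one_mul, Nat.zero_add]
    induction b with
    | zero => simp
    | succ b ihb =>
      rw [Finset.sum_range_succ, ihb]
      have e2 : c + (b+1) = b + c + 1 := by omega
      have e3 : b + 1 + c + 1 = b + c + 1 + 1 := by omega
      rw [e2, e3]
      exact (Nat.choose_succ_succ' _ _).symm
  | succ a iha =>
    induction b with
    | zero => simp
    | succ b ihb =>
      have hsplit : ∀ t ∈ Finset.range (b+1),
          (a + 1 + (b+1) - t).choose (a+1) * (c + t).choose t
            = (a + (b+1) - t).choose a * (c + t).choose t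
              + (a + 1 + b - t).choose (a+1) * (c + t).choose t := by
        intro t ht
        have htb : t ≤ b := by simpa [Nat.lt_succ_iff] using Finset.mem_range.mp ht
        have h1 : a + 1 + (b+1) - t = (a + (b+1) - t) + 1 := by omega
        have h2 : a + (b+1) - t = a + 1 + b - t := by omega
        rw [h1, Nat.choose_succ_succ', add_mul, h2]
      rw [Finset.sum_range_succ, Finset.sum_congr rfl hsplit, Finset.sum_add_distrib, ihb]
      have hA : ∑ t ∈ Finset.range (b+1), (a + (b+1) - t).choose a * (c + t).choose t
          = (a + (b+1) + c + 1).choose (b+1) - (c + (b+1)).choose (b+1) := by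
        have := iha (b+1) 
        rw [Finset.sum_range_succ] at this
        have h0 : a + (b+1) - (b+1) = a := by omega
        rw [h0, Nat.choose_self, one_mul] at this
        omega
      rw [hA]
      have hle : (c + (b+1)).choose (b+1) ≤ (a + (b+1) + c + 1).choose (b+1) :=
        Nat.choose_le_choose _ (by omega)
      have h3 : a + 1 + (b+1) - (b+1) = a + 1 := by omega
      rw [h3, Nat.choose_self, one_mul]
      have hfin : (a + 1 + (b+1) + c + 1).choose (b+1)
          = (a + 1 + b + c + 1).choose b + (a + (b+1) + c + 1).choose (b+1) := by
        have e : a + 1 + (b+1) + c + 1 = (a + 1 + b + c + 1) + 1 := by omega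
        have e2 : a + (b+1) + c + 1 = a + 1 + b + c + 1 := by omega
        rw [e, e2, Nat.choose_succ_succ']
      omega



lemma prodNat (b t : ℕ) : ∏ j ∈ Finset.range t, (b + 1 + j) = (b + t).descFactorial t := by
  induction t with
  | zero => simp
  | succ t ih =>
    rw [Finset.prod_range_succ, ih]
    have : b + (t+1) = (b + t) + 1 := by omega
    rw [this, Nat.succ_descFactorial_succ]
    ring

lemma gbinom_neg (m t : ℕ) : gbinom (-((m:ℚ)+1)) t = (-1)^t * ((m+t).choose t : ℚ) := by
  unfold gbinom
  rw [smul_eq_mul]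
  have h1 : ∏ j ∈ Finset.range t, (-((m:ℚ)+1) - j)
      = (-1)^t * (((m+t).descFactorial t : ℕ) : ℚ) := by
    calc ∏ j ∈ Finset.range t, (-((m:ℚ)+1) - j)
        = ∏ j ∈ Finset.range t, ((-1) * ((m+1+j : ℕ) : ℚ)) := by
          refine Finset.prod_congr rfl fun j _ => ?_
          push_cast; ring
      _ = (-1)^t * ((∏ j ∈ Finset.range t, (m+1+j) : ℕ) : ℚ) := by
          rw [Finset.prod_mul_distrib, Finset.prod_const, Finset.card_range, Nat.cast_prod]
      _ = (-1)^t * (((m+t).descFactorial t : ℕ) : ℚ) := by rw [prodNat]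
  rw [h1, Nat.descFactorial_eq_factorial_mul_choose]
  have ht : (t.factorial : ℚ) ≠ 0 := Nat.cast_ne_zero.mpr t.factorial_ne_zero
  push_cast
  field_simp

open Polynomial in
lemma eval_gbinom (p : ℚ[X]) (x : ℚ) (t : ℕ) :
    (gbinom p t).eval x = gbinom (p.eval x) t := by
  simp [gbinom, Polynomial.eval_prod, Polynomial.eval_smul, smul_eq_mul]

lemma natkey (n m : ℕ) :
    ∑ t ∈ Finset.range (n+1), (2*n - t).descFactorial n * (m+t).choose t
      = n.factorial * ((m+n+1)+n).choose n := by
  have h : ∀ t ∈ Finset.range (n+1),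
      (2*n - t).descFactorial n * (m+t).choose t
        = n.factorial * ((n + n - t).choose n * (m+t).choose t) := by
    intro t _
    rw [Nat.descFactorial_eq_factorial_mul_choose]
    have : 2*n - t = n + n - t := by omega
    rw [this, mul_assoc]
  rw [Finset.sum_congr rfl h, ← Finset.mul_sum, lemF]
  have : n + n + m + 1 = m + n + 1 + n := by omega
  rw [this]


open Polynomial in
/-- As polynomials in `x` over ℚ:
`∑_{t=0}^{n} (2n-t)⋯(n-t+1) (-1)^t C(x+2n-1, t) = n! (-1)^n C(x+n-2, n)`. -/
theorem stmt19 (n : ℕ) (hn : 1 ≤ n) :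
    ∑ t ∈ Finset.range (n + 1),
        (Nat.descFactorial (2 * n - t) n : ℚ[X]) * (-1 : ℚ[X]) ^ t *
          gbinom (X + ((2 * n - 1 : ℕ) : ℚ[X])) t =
      (Nat.factorial n : ℚ[X]) * (-1 : ℚ[X]) ^ n *
        gbinom (X + (((n : ℤ) - 2 : ℤ) : ℚ[X])) n := by
  apply Polynomial.eq_of_infinite_eval_eq
  have hinj : Function.Injective (fun m : ℕ => -((m:ℚ) + 2*n)) := by
    intro a b h
    simp only [neg_inj, add_left_inj] at h
    exact_mod_cast h
  refine (Set.infinite_range_of_injective hinj).mono ?_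
  rintro x ⟨m, rfl⟩
  simp only [Set.mem_setOf_eq]
  rw [Polynomial.eval_finset_sum]
  have hL : ∀ t ∈ Finset.range (n+1),
      Polynomial.eval (-((m:ℚ) + 2*n))
          ((Nat.descFactorial (2 * n - t) n : ℚ[X]) * (-1 : ℚ[X]) ^ t *
            gbinom (X + ((2 * n - 1 : ℕ) : ℚ[X])) t)
        = (((2*n - t).descFactorial n * (m+t).choose t : ℕ) : ℚ) := by
    intro t _
    rw [Polynomial.eval_mul, Polynomial.eval_mul, eval_gbinom]
    have harg : Polynomial.eval (-((m:ℚ) + 2*n)) (X + ((2 * n - 1 : ℕ) : ℚ[X]))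
        = -((m:ℚ)+1) := by
      have h1 : 1 ≤ 2*n := by omega
      simp only [Polynomial.eval_add, Polynomial.eval_X, Polynomial.eval_natCast]
      rw [Nat.cast_sub h1]
      push_cast
      ring
    rw [harg, gbinom_neg]
    have h1 : ((-1:ℚ))^t * (-1)^t = 1 := by
      rw [← mul_pow]; norm_num
    simp only [Polynomial.eval_pow, Polynomial.eval_neg, Polynomial.eval_one,
      Polynomial.eval_natCast]
    push_cast
    calc ((2*n - t).descFactorial n : ℚ) * (-1)^t * ((-1)^t * ((m+t).choose t : ℚ))
        = ((2*n - t).descFactorial n : ℚ) * ((m+t).choose t : ℚ) * ((-1)^t * (-1)^t) := by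
          ring
      _ = _ := by rw [h1, mul_one]
  rw [Finset.sum_congr rfl hL]
  have hR : Polynomial.eval (-((m:ℚ) + 2*n))
      ((Nat.factorial n : ℚ[X]) * (-1 : ℚ[X]) ^ n *
        gbinom (X + (((n : ℤ) - 2 : ℤ) : ℚ[X])) n)
      = ((n.factorial * ((m+n+1)+n).choose n : ℕ) : ℚ) := by
    rw [Polynomial.eval_mul, Polynomial.eval_mul, eval_gbinom]
    have harg : Polynomial.eval (-((m:ℚ) + 2*n)) (X + (((n : ℤ) - 2 : ℤ) : ℚ[X]))
        = -((((m+n+1 : ℕ)):ℚ)+1) := by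
      simp only [Polynomial.eval_add, Polynomial.eval_X, Polynomial.eval_intCast]
      push_cast
      ring
    rw [harg, gbinom_neg (m+n+1) n]
    have h1 : ((-1:ℚ))^n * (-1)^n = 1 := by
      rw [← mul_pow]; norm_num
    simp only [Polynomial.eval_pow, Polynomial.eval_neg, Polynomial.eval_one,
      Polynomial.eval_natCast]
    push_cast
    calc (n.factorial : ℚ) * (-1)^n * ((-1)^n * (((m+n+1)+n).choose n : ℚ))
        = (n.factorial : ℚ) * (((m+n+1)+n).choose n : ℚ) * ((-1)^n * (-1)^n) := by ring
      _ = _ := by rw [h1, mul_one]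
  rw [hR, ← Nat.cast_sum]
  exact_mod_cast natkey n m
end
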